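/- Let B be a category, F, G : B ⥤ Cat functors, α : F ⟶ G a natural transformation, and ∫α : ∫F ⥤ ∫G the induced functor on Grothendieck constructions ((b, x) ↦ (b, α_b x)). Then the following are equivalent: (1) there exist a functor R : ∫G ⥤ ∫F and an adjunction ∫α ⊣ R such that the projection ∫G ⥤ B sends every component of the counit of this adjunction to an isomorphism of B; (2) for every object b of B the functor α_b : F(b) ⥤ G(b) admits a right adjoint. -/

import Mathlib

open CategoryTheory Functor

universe v u v₁ u₁

variable {B : Type u₁} [Category.{v₁} B]

section GrothAdjAuxSec
open Limits

namespace GrothAdjAux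
variable {F G : B ⥤ Cat.{v, u}} (α : F ⟶ G)

lemma natα {b b' : B} (f : b ⟶ b') (x : F.obj b) :
    (α.app b').toFunctor.obj ((F.map f).toFunctor.obj x) = (G.map f).toFunctor.obj ((α.app b).toFunctor.obj x) :=
  Functor.congr_obj congr(($(α.naturality f)).toFunctor) x

lemma nathom {b b' : B} (f : b ⟶ b') {x x' : F.obj b} (φ : x ⟶ x') :
    (α.app b').toFunctor.map ((F.map f).toFunctor.map φ) =
      eqToHom (natα α f x) ≫ (G.map f).toFunctor.map ((α.app b).toFunctor.map φ) ≫ eqToHom (natα α f x').symm :=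
  Functor.congr_hom congr(($(α.naturality f)).toFunctor) φ

variable (Rb : ∀ b, G.obj b ⥤ F.obj b) (A : ∀ b, (α.app b).toFunctor ⊣ Rb b)

def e (X : Grothendieck F) (Y : Grothendieck G) :
    ((Grothendieck.map α).obj X ⟶ Y) ≃
      (X ⟶ (⟨Y.base, (Rb Y.base).obj Y.fiber⟩ : Grothendieck F)) where
  toFun g := ⟨g.base, (A Y.base).homEquiv _ _ (eqToHom (natα α g.base X.fiber) ≫ g.fiber)⟩
  invFun w := ⟨w.base, eqToHom (natα α w.base X.fiber).symm ≫
    ((A Y.base).homEquiv _ _).symm w.fiber⟩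
  left_inv g := by
    dsimp only
    refine Grothendieck.ext _ _ rfl ?_
    simp
    erw [eqToHom_trans_assoc, eqToHom_refl, Category.id_comp]
  right_inv w := by
    dsimp only
    refine Grothendieck.ext _ _ rfl ?_
    simp
    erw [eqToHom_trans_assoc, eqToHom_refl, Category.id_comp]
    simp

lemma he (X' X : Grothendieck F) (Y : Grothendieck G) (f : X' ⟶ X)
    (g : (Grothendieck.map α).obj X ⟶ Y) :
    e α Rb A X' Y ((Grothendieck.map α).map f ≫ g) = f ≫ e α Rb A X Y g := by
  refine Grothendieck.ext _ _ rfl ?_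
  dsimp [e]
  rw [← Adjunction.homEquiv_naturality_left, ← Adjunction.homEquiv_naturality_left]
  erw [← Adjunction.homEquiv_naturality_left]
  congr 1
  have hmf : ((Grothendieck.map α).map f).fiber = (eqToHom (α.naturality f.base).symm).toNatTrans.app X'.fiber ≫ (α.app X.base).toFunctor.map f.fiber := rfl
  erw [nathom α g.base f.fiber, hmf, (G.map g.base).toFunctor.map_comp, Cat.eqToHom_app, eqToHom_map, eqToHom_map]
  erw [eqToHom_map]
  simp only [Category.assoc]
  erw [eqToHom_trans_assoc, eqToHom_trans_assoc, eqToHom_trans_assoc, Category.assoc,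
    Category.assoc, eqToHom_trans_assoc]
  erw [eqToHom_trans_assoc, eqToHom_refl, Category.id_comp]
  rfl

def Rfunctor : Grothendieck G ⥤ Grothendieck F :=
  Adjunction.rightAdjointOfEquiv (fun X Y => e α Rb A X Y) (he α Rb A)

def adjR : Grothendieck.map α ⊣ Rfunctor α Rb A :=
  Adjunction.adjunctionOfEquivRight _ _

lemma counit_base (X : Grothendieck G) :
    ((adjR α Rb A).counit.app X).base = 𝟙 X.base := by
  have h1 : (adjR α Rb A).counit.app X = ((adjR α Rb A).homEquiv _ X).symm (𝟙 _) := by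
    simp [Adjunction.homEquiv_counit]
  have h2 : (adjR α Rb A).homEquiv ((Rfunctor α Rb A).obj X) X = e α Rb A _ X := by
    simp [adjR, Adjunction.adjunctionOfEquivRight]
    exact congrFun (congrFun (Adjunction.mkOfHomEquiv_homEquiv _) _) _
  rw [h1, h2]
  rfl

lemma chain_aux {C : Type*} [Category C] {a b c d e e' a0 a1 a2 : C} (K : b ⟶ e) (k : e ⟶ d)
    (u : c ⟶ d) (s : a = b) (p1 : c = a0) (p2 : a0 = b) (r1 : e = e') (r2 : e' = e) (q1 : a = a1)
    (q2 : a1 = a2) (q3 : a2 = c)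
    (h : (eqToHom s ≫ K) ≫ k = eqToHom q1 ≫ eqToHom q2 ≫ eqToHom q3 ≫ u) :
    eqToHom p1 ≫ eqToHom p2 ≫ K ≫ eqToHom r1 ≫ eqToHom r2 ≫ k = u := by
  subst_vars
  simpa using h

lemma aux2 {C D : Type*} [Category C] [Category D] (Φ : C ⥤ D) {x0 x1 x2 y0 y1 y2 : C}
    {d0 d1 e0 e1 z : D} (M : x2 ⟶ y0) (N : e0 ⟶ e1) (k : Φ.obj y2 ⟶ z)
    (b1 : x0 = x1) (b2 : x1 = x2) (b3 : y0 = y1) (b4 : y1 = y2)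
    (a1 : d0 = d1) (a2 : d1 = Φ.obj x0) (c1 : d0 = e0) (c2 : e1 = Φ.obj y2)
    (g1 : Φ.obj x2 = e0) (g2 : e1 = Φ.obj y0) (h : Φ.map M = eqToHom g1 ≫ N ≫ eqToHom g2) :
    eqToHom a1 ≫ eqToHom a2 ≫ Φ.map (eqToHom b1 ≫ eqToHom b2 ≫ M ≫ eqToHom b3 ≫ eqToHom b4) ≫ k =
      eqToHom c1 ≫ N ≫ eqToHom c2 ≫ k := by
  subst b1 b2 b3 b4
  simp [h]

lemma aux3 {C : Type*} [Category C] {a a1 b : C} (v : a ⟶ b) (p : a = a1) (q : a1 = a)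
    (r : b = b) : v = eqToHom p ≫ eqToHom q ≫ v ≫ eqToHom r := by
  subst p
  simp

section Forward

variable {α} {R : Grothendieck G ⥤ Grothendieck F} (adj : Grothendieck.map α ⊣ R)
  (b : B) (y : G.obj b)

def iB : (R.obj ⟨b, y⟩).base ⟶ b := (adj.counit.app ⟨b, y⟩).base

def rF : F.obj b := (F.map (iB adj b y)).toFunctor.obj (R.obj ⟨b, y⟩).fiber

def tF : (α.app b).toFunctor.obj (rF adj b y) ⟶ y :=
  eqToHom (natα α (iB adj b y) (R.obj ⟨b, y⟩).fiber) ≫ (adj.counit.app ⟨b, y⟩).fiber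

def gm (x : F.obj b) (u : (α.app b).toFunctor.obj x ⟶ y) :
    (Grothendieck.map α).obj ⟨b, x⟩ ⟶ (⟨b, y⟩ : Grothendieck G) :=
  ⟨𝟙 b, eqToHom (Functor.congr_obj congr(($(G.map_id b)).toFunctor) ((α.app b).toFunctor.obj x)) ≫ u⟩

def wm (x : F.obj b) (u : (α.app b).toFunctor.obj x ⟶ y) :
    (⟨b, x⟩ : Grothendieck F) ⟶ R.obj ⟨b, y⟩ :=
  adj.homEquiv _ _ (gm b y x u)

lemma hw (x : F.obj b) (u : (α.app b).toFunctor.obj x ⟶ y) :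
    (Grothendieck.map α).map (wm adj b y x u) ≫ adj.counit.app ⟨b, y⟩ = gm b y x u := by
  have := (adj.homEquiv (⟨b, x⟩ : Grothendieck F) ⟨b, y⟩).symm_apply_apply (gm b y x u)
  rw [Adjunction.homEquiv_counit] at this
  exact this

lemma hbase (x : F.obj b) (u : (α.app b).toFunctor.obj x ⟶ y) :
    (wm adj b y x u).base ≫ iB adj b y = 𝟙 b := by
  have := congrArg Grothendieck.Hom.base (hw adj b y x u)
  simp [iB, gm] at this
  exact this

lemma hPB (x : F.obj b) (u : (α.app b).toFunctor.obj x ⟶ y) :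
    F.map ((wm adj b y x u).base) ≫ F.map (iB adj b y) = 𝟙 (F.obj b) := by
  rw [← F.map_comp, hbase, F.map_id]

def vm (x : F.obj b) (u : (α.app b).toFunctor.obj x ⟶ y) : x ⟶ rF adj b y :=
  eqToHom (Functor.congr_obj congr(($(hPB adj b y x u)).toFunctor) x).symm ≫
    (F.map (iB adj b y)).toFunctor.map ((wm adj b y x u).fiber)

lemma hexist (x : F.obj b) (u : (α.app b).toFunctor.obj x ⟶ y) :
    (α.app b).toFunctor.map (vm adj b y x u) ≫ tF adj b y = u := by
  have hw' := hw adj b y x u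
  rw [Grothendieck.map_map] at hw'
  have hfib := Grothendieck.congr hw'
  simp only [Grothendieck.comp_fiber] at hfib
  simp only [vm, tF, Functor.map_comp, eqToHom_map, Category.assoc]
  dsimp only [rF, Cat.Hom.comp_toFunctor, Cat.Hom.id_toFunctor, Functor.comp_obj, Functor.id_obj, Grothendieck.map_obj_base, Grothendieck.map_obj_fiber] at hfib ⊢
  simp only [Functor.map_comp, eqToHom_map, Category.assoc]
  rw [nathom α (iB adj b y) ((wm adj b y x u).fiber)]
  simp only [gm, Functor.map_comp, Cat.eqToHom_app, eqToHom_map, Category.assoc,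
    eqToHom_trans_assoc, eqToHom_comp_iff] at hfib
  simp only [iB, Category.assoc, eqToHom_trans_assoc, eqToHom_comp_iff, eqToHom_refl,
    Category.id_comp, comp_eqToHom_iff] at hfib ⊢
  erw [(G.map _).toFunctor.map_comp, eqToHom_map] at hfib
  exact chain_aux _ _ _ _ _ _ _ _ _ _ _ hfib

lemma huniq (x : F.obj b) (u : (α.app b).toFunctor.obj x ⟶ y) [IsIso (iB adj b y)] (v' : x ⟶ rF adj b y)
    (h' : (α.app b).toFunctor.map v' ≫ tF adj b y = u) : v' = vm adj b y x u := by
  have hcomp2F : F.map (iB adj b y) ≫ F.map (inv (iB adj b y)) = 𝟙 (F.obj (R.obj ⟨b, y⟩).base) := by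
    rw [← F.map_comp, IsIso.hom_inv_id, F.map_id]
  have h₃ : (F.map (inv (iB adj b y))).toFunctor.obj (rF adj b y) = (R.obj ⟨b, y⟩).fiber :=
    Functor.congr_obj congr(($hcomp2F).toFunctor) (R.obj ⟨b, y⟩).fiber
  have hsym : (Grothendieck.map α).map
        (⟨inv (iB adj b y), (F.map (inv (iB adj b y))).toFunctor.map v' ≫ eqToHom h₃⟩ :
          (⟨b, x⟩ : Grothendieck F) ⟶ R.obj ⟨b, y⟩) ≫ adj.counit.app ⟨b, y⟩ = gm b y x u := by
    rw [Grothendieck.map_map]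
    refine Grothendieck.ext _ _ (by change inv (iB adj b y) ≫ iB adj b y = 𝟙 b; exact IsIso.inv_hom_id _) ?_
    simp only [Grothendieck.comp_fiber, Grothendieck.map_map, gm]
    have hG : G.map (inv (iB adj b y)) ≫ G.map (iB adj b y) = 𝟙 (G.obj b) := by
      rw [← G.map_comp, IsIso.inv_hom_id, G.map_id]
    have hcg := Functor.congr_hom congr(($hG).toFunctor) ((α.app b).toFunctor.map v')
    simp only [Cat.Hom.comp_map, Cat.Hom.id_map] at hcg
    rw [← h']
    simp only [tF, Functor.map_comp, eqToHom_map, Cat.eqToHom_app, Category.assoc,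
      nathom α (inv (iB adj b y)) v', eqToHom_trans_assoc]
    simp only [iB] at hcg ⊢
    exact aux2 _ _ _ _ _ _ _ _ _ _ _ _ _ _ hcg
  have hww : (⟨inv (iB adj b y), (F.map (inv (iB adj b y))).toFunctor.map v' ≫ eqToHom h₃⟩ :
      (⟨b, x⟩ : Grothendieck F) ⟶ R.obj ⟨b, y⟩) = wm adj b y x u := by
    apply Equiv.injective (adj.homEquiv _ _).symm
    rw [wm, Equiv.symm_apply_apply, Adjunction.homEquiv_counit]
    exact hsym
  have hfib := Grothendieck.congr hww.symm
  rw [vm]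
  rw [hfib]
  have hcomp3 : F.map (inv (iB adj b y)) ≫ F.map (iB adj b y) = 𝟙 (F.obj b) := by
    rw [← F.map_comp, IsIso.inv_hom_id, F.map_id]
  have hcg := Functor.congr_hom congr(($hcomp3).toFunctor) v'
  simp only [Cat.Hom.comp_map, Cat.Hom.id_map] at hcg
  simp [eqToHom_map, hcg]
  exact aux3 _ _ _ _

omit b y in
lemma fiberwise_isLeftAdjoint
    (hiso : ∀ X : Grothendieck G, IsIso ((Grothendieck.forget G).map (adj.counit.app X)))
    (b : B) : (α.app b).toFunctor.IsLeftAdjoint := by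
  have hterm : ∀ y : G.obj b, HasTerminal (CostructuredArrow (α.app b).toFunctor y) := by
    intro y
    haveI : IsIso (iB adj b y) := hiso ⟨b, y⟩
    exact IsTerminal.hasTerminal
      (IsTerminal.ofUniqueHom (Y := CostructuredArrow.mk (tF adj b y))
        (fun c => CostructuredArrow.homMk (vm adj b y c.left c.hom)
          (by simpa using hexist adj b y c.left c.hom))
        (fun c m => by
          apply CostructuredArrow.hom_ext
          exact huniq adj b y c.left c.hom m.left (by simpa using CostructuredArrow.w m)))
  exact isLeftAdjoint_of_costructuredArrowTerminals _

end Forward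

end GrothAdjAux

end GrothAdjAuxSec

/-- For a natural transformation `α : F ⟶ G` of functors `F G : B ⥤ Cat`, the induced functor
`∫α : ∫F ⥤ ∫G` on Grothendieck constructions admits a right adjoint whose adjunction counit
has all of its components sent to isomorphisms by the projection `∫G ⥤ B` if and only if the
component `α.app b : F(b) ⥤ G(b)` admits a right adjoint for every `b : B`. -/
theorem grothendieck_map_left_adjoint_iff_fiberwise
    (F G : B ⥤ Cat.{v, u}) (α : F ⟶ G) :
    (∃ (R : Grothendieck G ⥤ Grothendieck F) (adj : Grothendieck.map α ⊣ R),
        ∀ X : Grothendieck G, IsIso ((Grothendieck.forget G).map (adj.counit.app X))) ↔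
      ∀ b : B, (α.app b).toFunctor.IsLeftAdjoint := by
  constructor
  · rintro ⟨R, adj, hiso⟩ b
    exact GrothAdjAux.fiberwise_isLeftAdjoint adj hiso b
  · intro h
    choose Rb hA using fun b => (h b).exists_rightAdjoint
    refine ⟨GrothAdjAux.Rfunctor α Rb (fun b => (hA b).some),
      GrothAdjAux.adjR α Rb (fun b => (hA b).some), fun X => ?_⟩
    have h1 := GrothAdjAux.counit_base α Rb (fun b => (hA b).some) X
    simp only [Grothendieck.forget_map]
    rw [h1]
    exact IsIso.id X.base
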